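/- Let u* = √(π/2) and J_σ(u) = argmax_v v·Φ((u−v)/σ) with Φ the standard Gaussian CDF. For σ ∈ (1/2,1), |J_σ(u*) − u*| ≥ (2/5)(1 − σ). -/

import Mathlib

open MeasureTheory Real Set

noncomputable def gaussPDF (ω : ℝ) : ℝ :=
  (Real.sqrt (2 * Real.pi))⁻¹ * Real.exp (-ω ^ 2 / 2)

noncomputable def gaussCDF (ω : ℝ) : ℝ := ∫ t in Set.Iic ω, gaussPDF t

lemma gaussPDF_eq : gaussPDF = fun x => (Real.sqrt (2 * Real.pi))⁻¹ * Real.exp (-(1/2) * x ^ 2) := by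
  funext x; unfold gaussPDF; ring_nf

lemma gaussPDF_pos (x : ℝ) : 0 < gaussPDF x := by
  unfold gaussPDF
  positivity

lemma integrable_gaussPDF : Integrable gaussPDF := by
  rw [gaussPDF_eq]
  exact (integrable_exp_neg_mul_sq (by norm_num : (0:ℝ) < 1/2)).const_mul _

lemma continuous_gaussPDF : Continuous gaussPDF := by
  unfold gaussPDF
  continuity

lemma integral_gaussPDF : ∫ x, gaussPDF x = 1 := by
  rw [gaussPDF_eq, integral_const_mul, integral_gaussian]
  rw [div_div_eq_mul_div, div_one]
  rw [inv_mul_eq_div, div_eq_one_iff_eq (by positivity)]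
  norm_num [mul_comm]

lemma gaussCDF_zero : gaussCDF 0 = 1 / 2 := by
  have heven : ∀ x : ℝ, gaussPDF (-x) = gaussPDF x := by
    intro x; unfold gaussPDF; ring_nf
  have h1 : gaussCDF 0 = ∫ x in Set.Ioi (0:ℝ), gaussPDF x := by
    unfold gaussCDF
    rw [show (0:ℝ) = -0 by ring, ← integral_comp_neg_Iic]
    simp [heven]
  have h2 : gaussCDF 0 + ∫ x in Set.Ioi (0:ℝ), gaussPDF x = 1 := by
    unfold gaussCDF
    rw [intervalIntegral.integral_Iic_add_Ioi integrable_gaussPDF.integrableOn integrable_gaussPDF.integrableOn,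
      integral_gaussPDF]
  rw [h1] at h2 ⊢
  linarith


lemma gaussCDF_eq (y : ℝ) : gaussCDF y = gaussCDF 0 + ∫ t in (0:ℝ)..y, gaussPDF t := by
  unfold gaussCDF
  rw [← intervalIntegral.integral_Iic_sub_Iic integrable_gaussPDF.integrableOn
    integrable_gaussPDF.integrableOn]
  ring

lemma hasDerivAt_gaussCDF (x : ℝ) : HasDerivAt gaussCDF (gaussPDF x) x := by
  have h : HasDerivAt (fun y => ∫ t in (0:ℝ)..y, gaussPDF t) (gaussPDF x) x :=
    (intervalIntegral.integral_hasStrictDerivAt_right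
      (continuous_gaussPDF.intervalIntegrable _ _)
      (continuous_gaussPDF.stronglyMeasurable.stronglyMeasurableAtFilter)
      continuous_gaussPDF.continuousAt).hasDerivAt
  have : (fun y => gaussCDF 0 + ∫ t in (0:ℝ)..y, gaussPDF t) = gaussCDF :=
    funext fun y => (gaussCDF_eq y).symm
  rw [← this]
  exact h.const_add _

lemma continuous_gaussCDF : Continuous gaussCDF :=
  continuous_iff_continuousAt.2 fun x => (hasDerivAt_gaussCDF x).continuousAt

lemma gaussCDF_le_half {x : ℝ} (hx : x ≤ 0) : gaussCDF x ≤ 1 / 2 := by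
  rw [gaussCDF_eq x, gaussCDF_zero]
  have : ∫ t in (0:ℝ)..x, gaussPDF t ≤ 0 := by
    rw [intervalIntegral.integral_symm]
    simp only [neg_nonpos]
    exact intervalIntegral.integral_nonneg hx (fun t _ => (gaussPDF_pos t).le)
  linarith

lemma gaussCDF_le_linear {x : ℝ} (hx : 0 ≤ x) :
    gaussCDF x ≤ 1 / 2 + x * (Real.sqrt (2 * Real.pi))⁻¹ := by
  rw [gaussCDF_eq x, gaussCDF_zero]
  have h : ∫ t in (0:ℝ)..x, gaussPDF t ≤ ∫ _t in (0:ℝ)..x, (Real.sqrt (2 * Real.pi))⁻¹ := by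
    apply intervalIntegral.integral_mono_on hx
      (continuous_gaussPDF.intervalIntegrable _ _) (intervalIntegrable_const)
    intro t _
    unfold gaussPDF
    have h1 : Real.exp (-t ^ 2 / 2) ≤ 1 := by
      rw [Real.exp_le_one_iff]
      nlinarith [sq_nonneg t]
    have h2 : (0:ℝ) < (Real.sqrt (2 * Real.pi))⁻¹ := by positivity
    nlinarith
  rw [intervalIntegral.integral_const, smul_eq_mul, sub_zero] at h
  linarith


lemma sqrt_two_pi_eq : Real.sqrt (2 * Real.pi) = 2 * Real.sqrt (Real.pi / 2) := by
  rw [show (2:ℝ) * Real.pi = 2^2 * (Real.pi / 2) by ring,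
    Real.sqrt_mul (by positivity), Real.sqrt_sq (by norm_num)]

lemma ustar_bounds : 1.25 < Real.sqrt (Real.pi / 2) ∧ Real.sqrt (Real.pi / 2) < 1.2552 := by
  have h2 : Real.sqrt (Real.pi / 2) ^ 2 = Real.pi / 2 := Real.sq_sqrt (by positivity)
  have h3 : (0:ℝ) ≤ Real.sqrt (Real.pi / 2) := Real.sqrt_nonneg _
  constructor <;> nlinarith [Real.pi_gt_d6, Real.pi_lt_d2]

set_option maxHeartbeats 1000000 in
lemma key_ineq {σ v : ℝ} (hσ1 : 1/2 < σ) (hσ2 : σ < 1)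
    (hv1 : Real.sqrt (Real.pi / 2) - 2/5 * (1 - σ) < v)
    (hv2 : v < Real.sqrt (Real.pi / 2) + 2/5 * (1 - σ)) :
    gaussCDF ((Real.sqrt (Real.pi / 2) - v) / σ) <
      v / σ * gaussPDF ((Real.sqrt (Real.pi / 2) - v) / σ) := by
  set u := Real.sqrt (Real.pi / 2) with hu
  have hub := ustar_bounds
  obtain ⟨hul, huu⟩ := hub
  have hσ0 : 0 < σ := by linarith
  set x := (u - v) / σ with hx
  have hvx : v = u - σ * x := by rw [hx, mul_div_assoc', mul_div_cancel_left₀ _ hσ0.ne']; ring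
  have hsx1 : σ * x < 2/5 * (1 - σ) := by
    have : u - v < 2/5 * (1 - σ) := by linarith
    calc σ * x = u - v := by rw [hx, mul_div_assoc', mul_div_cancel_left₀ _ hσ0.ne']
    _ < _ := this
  have hsx2 : -(2/5 * (1 - σ)) < σ * x := by
    have : -(2/5 * (1 - σ)) < u - v := by linarith
    calc -(2/5 * (1 - σ)) < u - v := this
    _ = σ * x := by rw [hx, mul_div_assoc', mul_div_cancel_left₀ _ hσ0.ne']
  have hx1 : x < 2/5 := by nlinarith
  have hx2 : -(2/5) < x := by nlinarith
  set E := Real.exp (-x ^ 2 / 2) with hE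
  have hEpos : 0 < E := Real.exp_pos _
  have hE1 : E ≤ 1 := by
    rw [hE, Real.exp_le_one_iff]; nlinarith [sq_nonneg x]
  have hE2 : 1 - x ^ 2 / 2 ≤ E := by
    have := Real.add_one_le_exp (-x ^ 2 / 2)
    rw [hE]; linarith
  have hpdf : gaussPDF x = (2 * u)⁻¹ * E := by
    rw [gaussPDF, sqrt_two_pi_eq, ← hu, hE]
  rw [hpdf]
  have h2u : (0:ℝ) < 2 * u := by linarith
  rcases le_or_gt x 0 with hxneg | hxpos
  · have hΦ := gaussCDF_le_half hxneg
    have key : σ * u < v * E := by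
      nlinarith [mul_nonneg (mul_nonneg hσ0.le (neg_nonneg.2 hxneg)) (sq_nonneg x),
        sq_nonneg x, mul_pos hσ0 hEpos]
    have : (1:ℝ)/2 < v / σ * ((2 * u)⁻¹ * E) := by
      rw [show v / σ * ((2 * u)⁻¹ * E) = v * E / (σ * (2 * u)) by ring,
        lt_div_iff₀ (by positivity)]
      nlinarith
    linarith
  · have hΦ := gaussCDF_le_linear hxpos.le
    rw [sqrt_two_pi_eq, ← hu] at hΦ
    have key : σ * (u + x) < v * E := by
      nlinarith [mul_pos hσ0 hxpos, sq_nonneg x,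
        mul_nonneg (mul_nonneg hσ0.le hxpos.le) (sq_nonneg x)]
    have : 1/2 + x * (2 * u)⁻¹ < v / σ * ((2 * u)⁻¹ * E) := by
      rw [show v / σ * ((2 * u)⁻¹ * E) = v * E / (σ * (2 * u)) by ring,
        show 1/2 + x * (2 * u)⁻¹ = σ * (u + x) / (σ * (2 * u)) by field_simp; rw [add_div, div_self (ne_of_gt (by linarith : (0:ℝ) < u))],
        div_lt_div_iff₀ (by positivity) (by positivity)]
      exact mul_lt_mul_of_pos_right key (by positivity)
    linarith

/-- With `u* = √(π/2)` and `J σ u` the unique maximizer of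
`v ↦ v Φ((u - v)/σ)`, for all `σ ∈ (1/2, 1)`,
`|J σ u* - u*| ≥ (2/5)(1 - σ)`. -/
theorem stmt_19 (J : ℝ → ℝ → ℝ)
    (hJmax : ∀ σ : ℝ, 0 < σ → ∀ u v : ℝ,
      v * gaussCDF ((u - v) / σ) ≤ J σ u * gaussCDF ((u - J σ u) / σ))
    (hJuniq : ∀ σ : ℝ, 0 < σ → ∀ u v : ℝ,
      (∀ w : ℝ, w * gaussCDF ((u - w) / σ) ≤ v * gaussCDF ((u - v) / σ)) →
        v = J σ u) :
    ∀ σ ∈ Set.Ioo (1 / 2 : ℝ) 1,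
      (2 / 5) * (1 - σ) ≤ |J σ (Real.sqrt (Real.pi / 2)) -
        Real.sqrt (Real.pi / 2)| := by
  intro σ hσ
  obtain ⟨hσ1, hσ2⟩ := hσ
  have hσ0 : 0 < σ := by linarith
  set u := Real.sqrt (Real.pi / 2) with hu
  set c := (2:ℝ)/5 * (1 - σ) with hc
  have hc0 : 0 < c := by rw [hc]; nlinarith
  set F : ℝ → ℝ := fun v => v * gaussCDF ((u - v) / σ) with hF
  have hFd : ∀ v : ℝ, HasDerivAt F
      (gaussCDF ((u - v) / σ) + v * (gaussPDF ((u - v) / σ) * (-1 / σ))) v := by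
    intro v
    have hinner : HasDerivAt (fun w : ℝ => (u - w) / σ) (-1 / σ) v :=
      ((hasDerivAt_id v).const_sub u).div_const σ
    have houter : HasDerivAt (fun w : ℝ => gaussCDF ((u - w) / σ))
        (gaussPDF ((u - v) / σ) * (-1 / σ)) v :=
      by have := (hasDerivAt_gaussCDF ((u - v) / σ)).comp v hinner; exact this
    have := (hasDerivAt_id v).mul houter
    simp at this; exact this
  have hanti : StrictAntiOn F (Icc (u - c) (u + c)) := by
    apply strictAntiOn_of_deriv_neg (convex_Icc _ _)
    · exact (continuous_id.mul (continuous_gaussCDF.comp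
        (by continuity))).continuousOn
    · intro v hv
      rw [interior_Icc] at hv
      rw [(hFd v).deriv]
      have hk := key_ineq hσ1 hσ2 (by linarith [hv.1] : u - 2/5 * (1 - σ) < v)
        (by linarith [hv.2] : v < u + 2/5 * (1 - σ))
      have heq : v * (gaussPDF ((u - v) / σ) * (-1 / σ))
          = -(v / σ * gaussPDF ((u - v) / σ)) := by field_simp
      rw [heq]
      linarith
  have hJnot : J σ u ∉ Ioo (u - c) (u + c) := by
    intro hmem
    have h1 : F (J σ u) < F (u - c) := by
      apply hanti (left_mem_Icc.2 (by linarith)) (Ioo_subset_Icc_self hmem) hmem.1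
    have h2 : F (u - c) ≤ F (J σ u) := hJmax σ hσ0 u (u - c)
    linarith
  rw [Set.mem_Ioo, not_and_or, not_lt, not_lt] at hJnot
  rcases hJnot with h | h
  · rw [abs_sub_comm]
    calc (2:ℝ)/5 * (1 - σ) = c := rfl
    _ ≤ u - J σ u := by linarith
    _ ≤ |u - J σ u| := le_abs_self _
  · calc (2:ℝ)/5 * (1 - σ) = c := rfl
    _ ≤ J σ u - u := by linarith
    _ ≤ |J σ u - u| := le_abs_self _
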